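/- Define T_one : [0, 1] → ℝ by T_one(t) = Φ̃(0) − inf_{u ∈ ℝ} ( ((1 − t)/2) · Φ̃(−u) + ((1 + t)/2) · Φ̃(u) ). Then T_one(t) ≥ t for all t ∈ [0, 1], and T_one(0) = 0. -/

import Mathlib

/-- The one-sided linear-core surrogate `Φ̃`. -/
noncomputable def tildePhi (Φ : ℝ → ℝ) (u : ℝ) : ℝ :=
  if 1 < u then Φ (1 - u) / deriv Φ 0
  else -u + 1 + Φ 0 / deriv Φ 0

/-- The transformation for one-sided smoothing:
`T_one(t) = Φ̃(0) - inf_u ((1-t)/2 · Φ̃(-u) + (1+t)/2 · Φ̃(u))`. -/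
noncomputable def Tone (Φ : ℝ → ℝ) (t : ℝ) : ℝ :=
  tildePhi Φ 0 - ⨅ u : ℝ, ((1 - t) / 2 * tildePhi Φ (-u) + (1 + t) / 2 * tildePhi Φ u)

lemma support_line (Φ : ℝ → ℝ) (hconv : ConvexOn ℝ Set.univ Φ)
    (hdiff : Differentiable ℝ Φ) (x : ℝ) :
    Φ 0 + deriv Φ 0 * x ≤ Φ x := by
  rcases lt_trichotomy x 0 with hx | hx | hx
  · have := hconv.slope_le_deriv (Set.mem_univ x) (Set.mem_univ 0) hx (hdiff 0)
    rw [slope_def_field, div_le_iff₀ (by linarith)] at this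
    nlinarith
  · simp [hx]
  · have := hconv.deriv_le_slope (Set.mem_univ 0) (Set.mem_univ x) hx (hdiff 0)
    rw [slope_def_field] at this
    rw [le_div_iff₀ (by linarith)] at this
    nlinarith

lemma tildePhi_nonneg (Φ : ℝ → ℝ) (hnn : ∀ u, 0 ≤ Φ u) (hd0 : 0 < deriv Φ 0) (u : ℝ) :
    0 ≤ tildePhi Φ u := by
  unfold tildePhi
  split_ifs with h
  · exact div_nonneg (hnn _) hd0.le
  · push_neg at h
    have : 0 ≤ Φ 0 / deriv Φ 0 := div_nonneg (hnn 0) hd0.le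
    linarith

/-- `T_one(t) ≥ t` for all `t ∈ [0, 1]`, and `T_one(0) = 0`. -/
theorem Tone_linear_lower_bound (Φ : ℝ → ℝ)
    (hconv : ConvexOn ℝ Set.univ Φ) (hdiff : Differentiable ℝ Φ)
    (hnn : ∀ u, 0 ≤ Φ u) (hd0 : 0 < deriv Φ 0) :
    (∀ t ∈ Set.Icc (0 : ℝ) 1, t ≤ Tone Φ t) ∧ Tone Φ 0 = 0 := by
  set c := Φ 0 / deriv Φ 0 with hc
  have hc0 : 0 ≤ c := div_nonneg (hnn 0) hd0.le
  have hcd : c * deriv Φ 0 = Φ 0 := div_mul_cancel₀ _ hd0.ne'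
  have h0 : tildePhi Φ 0 = 1 + c := by norm_num [tildePhi, hc]
  have hbdd : ∀ t : ℝ, t ∈ Set.Icc (0:ℝ) 1 → BddBelow (Set.range fun u : ℝ =>
      ((1 - t) / 2 * tildePhi Φ (-u) + (1 + t) / 2 * tildePhi Φ u)) := by
    rintro t ⟨ht0, ht1⟩
    refine ⟨0, ?_⟩
    rintro _ ⟨u, rfl⟩
    have h1 := tildePhi_nonneg Φ hnn hd0 (-u)
    have h2 := tildePhi_nonneg Φ hnn hd0 u
    have ha : (0:ℝ) ≤ (1 - t) / 2 := by linarith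
    have hb : (0:ℝ) ≤ (1 + t) / 2 := by linarith
    exact add_nonneg (mul_nonneg ha h1) (mul_nonneg hb h2)
  constructor
  · rintro t ht
    have hle : (⨅ u : ℝ, ((1 - t) / 2 * tildePhi Φ (-u) + (1 + t) / 2 * tildePhi Φ u))
        ≤ (1 - t) / 2 * tildePhi Φ (-1) + (1 + t) / 2 * tildePhi Φ 1 :=
      ciInf_le (hbdd t ht) 1
    have e1 : tildePhi Φ (-1 : ℝ) = 2 + c := by norm_num [tildePhi, hc]
    have e2 : tildePhi Φ (1 : ℝ) = c := by norm_num [tildePhi, hc]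
    rw [e1, e2] at hle
    unfold Tone
    rw [h0]
    nlinarith
  · unfold Tone
    rw [h0]
    have hval : (⨅ u : ℝ, ((1 - (0:ℝ)) / 2 * tildePhi Φ (-u) + (1 + (0:ℝ)) / 2 * tildePhi Φ u))
        = 1 + c := by
      apply le_antisymm
      · have h := ciInf_le (hbdd 0 (by norm_num)) (0 : ℝ)
        simp only [neg_zero, h0] at h
        linarith
      · apply le_ciInf
        intro u
        have key : ∀ v : ℝ, 2 + 2 * c ≤ tildePhi Φ (-v) + tildePhi Φ v := by
          intro v
          rcases lt_or_ge v (-1) with hv | hv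
          · have hnv : 1 < -v := by linarith
            have hvle : ¬ (1 < v) := by linarith
            rw [tildePhi, tildePhi, if_pos hnv, if_neg hvle]
            have hsup := support_line Φ hconv hdiff (1 - -v)
            have : c + (1 + v) ≤ Φ (1 - -v) / deriv Φ 0 := by
              rw [le_div_iff₀ hd0]
              nlinarith [hcd]
            linarith
          · rcases le_or_gt v 1 with hv1 | hv1
            · have h1 : ¬ (1 < v) := not_lt.mpr hv1
              have h2 : ¬ (1 < -v) := by intro h; linarith
              rw [tildePhi, tildePhi, if_neg h2, if_neg h1]
              ring_nf
              linarith [show Φ 0 * (deriv Φ 0)⁻¹ = c from (div_eq_mul_inv _ _).symm]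
            · have h2 : ¬ (1 < -v) := by intro h; linarith
              rw [tildePhi, tildePhi, if_pos hv1, if_neg h2]
              have hsup := support_line Φ hconv hdiff (1 - v)
              have : c + (1 - v) ≤ Φ (1 - v) / deriv Φ 0 := by
                rw [le_div_iff₀ hd0]
                nlinarith [hcd]
              linarith
        linarith [key u]
    rw [hval]
    ring
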